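/- (Non-stabilizability of the critical two-server re-entrant line network, hitting-time form.) Let α be defined by α_k = Σ_{j=0}^{j̄(k)−1} μ_{ī(k),j}^{−1}·(−1)^{σ(ī(k),j)}. Then for every non-idling policy 𝒫, every realization (X_n) of the induced chain started at a state x ∈ ℤ₊^M, and every state y ∈ ℤ₊^M with α⋅x ≠ α⋅y, the hitting time T_y = inf{n ≥ 0 : X_n = y} has infinite expectation: E[T_y] = ∞. -/

import Mathlib

open MeasureTheory
open scoped ENNReal

/-- `kbar`, `ibar`, `jbar` form a valid indexing of the `M` queues by the operations
`(i, j)` with `1 ≤ j ≤ nᵢ`: `kbar` is a bijection from the set of such operations onto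
`Fin M` with inverse components `ibar`, `jbar`. -/
def ReIndex (S M : ℕ) (n : Fin S → ℕ) (kbar : Fin S → ℕ → Fin M)
    (ibar : Fin M → Fin S) (jbar : Fin M → ℕ) : Prop :=
  (∀ (i : Fin S) (j : ℕ), 1 ≤ j → j ≤ n i →
      ibar (kbar i j) = i ∧ jbar (kbar i j) = j) ∧
  (∀ k : Fin M, 1 ≤ jbar k ∧ jbar k ≤ n (ibar k) ∧ kbar (ibar k) (jbar k) = k)

/-- Criticality: for each stream `i`, the total mean processing time required on server 1
equals that required on server 2, i.e.
`∑_{j ∈ C₁(i)} μᵢⱼ⁻¹ = ∑_{j ∈ C₂(i)} μᵢⱼ⁻¹` where `Cₗ(i) = {j ≤ nᵢ : σ(i,j) = ℓ}`. -/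
def ReCritical (S : ℕ) (n : Fin S → ℕ) (mu : Fin S → ℕ → ℝ) (sg : Fin S → ℕ → ℕ) :
    Prop :=
  ∀ i : Fin S,
    ∑ j ∈ (Finset.range (n i + 1)).filter (fun j => sg i j = 1), (mu i j)⁻¹ =
    ∑ j ∈ (Finset.range (n i + 1)).filter (fun j => sg i j = 2), (mu i j)⁻¹

/-- The vector `Δ̂(i, j) ∈ ℝ^M` of operation `(i, j)`:
`Δ̂(i,0) = μᵢ₀ e_{k̄(i,1)}`, `Δ̂(i,j) = μᵢⱼ (e_{k̄(i,j+1)} - e_{k̄(i,j)})` for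
`1 ≤ j ≤ nᵢ - 1`, and `Δ̂(i,nᵢ) = -μᵢₙᵢ e_{k̄(i,nᵢ)}`. -/
noncomputable def reDhat (S M : ℕ) (n : Fin S → ℕ) (mu : Fin S → ℕ → ℝ)
    (kbar : Fin S → ℕ → Fin M) (i : Fin S) (j : ℕ) : Fin M → ℝ :=
  fun k =>
    if j = 0 then (if k = kbar i 1 then mu i 0 else 0)
    else if j = n i then (if k = kbar i (n i) then -mu i (n i) else 0)
    else (if k = kbar i (j + 1) then mu i j else 0) +
         (if k = kbar i j then -mu i j else 0)

/-- The vector `α ∈ ℝ^M` with entries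
`α_k = ∑_{j=0}^{j̄(k)-1} μ_{ī(k),j}⁻¹ (-1)^{σ(ī(k),j)}`. -/
noncomputable def reAlpha (S M : ℕ) (mu : Fin S → ℕ → ℝ) (sg : Fin S → ℕ → ℕ)
    (ibar : Fin M → Fin S) (jbar : Fin M → ℕ) : Fin M → ℝ :=
  fun k => ∑ j ∈ Finset.range (jbar k), (mu (ibar k) j)⁻¹ * (-1 : ℝ) ^ sg (ibar k) j

/-- The new state after operation `(i, j)` completes at state `z`: operation `(i,0)`
adds a job to queue `k̄(i,1)`; operation `(i,j)` with `1 ≤ j ≤ nᵢ - 1` moves a job from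
queue `k̄(i,j)` to queue `k̄(i,j+1)`; operation `(i,nᵢ)` removes a job from queue
`k̄(i,nᵢ)`. -/
def reMove (S M : ℕ) (n : Fin S → ℕ) (kbar : Fin S → ℕ → Fin M)
    (z : Fin M → ℕ) (i : Fin S) (j : ℕ) : Fin M → ℕ :=
  fun k =>
    if j = 0 then z k + (if k = kbar i 1 then 1 else 0)
    else if j = n i then z k - (if k = kbar i (n i) then 1 else 0)
    else z k + (if k = kbar i (j + 1) then 1 else 0) - (if k = kbar i j then 1 else 0)

/-- A non-idling policy assigns to each state `z` a pair of operations
`((i₁,j₁), (i₂,j₂))` with `σ(i₁,j₁) = 1` and `σ(i₂,j₂) = 2`, both allowed at `z`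
(an operation `(i,j)` with `j ≥ 1` requires queue `k̄(i,j)` to be nonempty). -/
def ReNonIdling (S M : ℕ) (n : Fin S → ℕ) (sg : Fin S → ℕ → ℕ)
    (kbar : Fin S → ℕ → Fin M)
    (pol : (Fin M → ℕ) → ((Fin S × ℕ) × (Fin S × ℕ))) : Prop :=
  ∀ z : Fin M → ℕ,
    sg (pol z).1.1 (pol z).1.2 = 1 ∧ sg (pol z).2.1 (pol z).2.2 = 2 ∧
    (pol z).1.2 ≤ n (pol z).1.1 ∧ (pol z).2.2 ≤ n (pol z).2.1 ∧
    ((pol z).1.2 = 0 ∨ 0 < z (kbar (pol z).1.1 (pol z).1.2)) ∧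
    ((pol z).2.2 = 0 ∨ 0 < z (kbar (pol z).2.1 (pol z).2.2))

/-- Transition probabilities of the chain induced by a policy `pol`: among the two
selected operations `(i₁,j₁)` (server 1) and `(i₂,j₂)` (server 2), operation `(i₁,j₁)`
completes first with probability `μ_{i₁j₁} / (μ_{i₁j₁} + μ_{i₂j₂})` and `(i₂,j₂)` with
probability `μ_{i₂j₂} / (μ_{i₁j₁} + μ_{i₂j₂})`. -/
noncomputable def reTrans (S M : ℕ) (n : Fin S → ℕ) (mu : Fin S → ℕ → ℝ)
    (kbar : Fin S → ℕ → Fin M)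
    (pol : (Fin M → ℕ) → ((Fin S × ℕ) × (Fin S × ℕ)))
    (z z' : Fin M → ℕ) : ℝ :=
  (if z' = reMove S M n kbar z (pol z).1.1 (pol z).1.2 then
      mu (pol z).1.1 (pol z).1.2 /
        (mu (pol z).1.1 (pol z).1.2 + mu (pol z).2.1 (pol z).2.2) else 0) +
  (if z' = reMove S M n kbar z (pol z).2.1 (pol z).2.2 then
      mu (pol z).2.1 (pol z).2.2 /
        (mu (pol z).1.1 (pol z).1.2 + mu (pol z).2.1 (pol z).2.2) else 0)

/-- `X` is a realization of a Markov chain with one-step transition probabilities `p`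
on the filtered probability space `(Ω, ℱ, μ)`. -/
def IsRealization {Ω : Type} {S : Type} [MeasurableSpace S] {mΩ : MeasurableSpace Ω}
    (μ : Measure Ω) (ℱ : Filtration ℕ mΩ) (X : ℕ → Ω → S) (p : S → S → ℝ) : Prop :=
  (∀ n, Measurable[ℱ n] (X n)) ∧
  ∀ (n : ℕ) (z z' : S), ∀ᵐ ω ∂μ, X n ω = z →
    (μ[Set.indicator {ω' | X (n + 1) ω' = z'} (fun _ => (1 : ℝ)) | ℱ n]) ω = p z z'

/-- The hitting time of the state `y` by the process `X`; `∞` if `y` is never hit. -/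
noncomputable def hitTime {Ω S : Type*} (X : ℕ → Ω → S) (y : S) (ω : Ω) : ℝ≥0∞ :=
  sInf {t : ℝ≥0∞ | ∃ n : ℕ, X n ω = y ∧ (n : ℝ≥0∞) = t}

theorem realization_measure_eq {Ω : Type} {St : Type} [MeasurableSpace St]
    [MeasurableSingletonClass St]
    {mΩ : MeasurableSpace Ω} {μ : Measure Ω} [IsProbabilityMeasure μ]
    {ℱ : Filtration ℕ mΩ} {X : ℕ → Ω → St} {p : St → St → ℝ}
    (hX : IsRealization μ ℱ X p) (n : ℕ) (z z' : St) (hp : 0 ≤ p z z')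
    (A : Set Ω) (hA : MeasurableSet[ℱ n] A) (hAz : A ⊆ {ω | X n ω = z}) :
    μ (A ∩ {ω | X (n+1) ω = z'}) = ENNReal.ofReal (p z z') * μ A := by
  have hAm : MeasurableSet A := ℱ.le n A hA
  have hBm : MeasurableSet {ω | X (n+1) ω = z'} :=
    (ℱ.le (n+1) _ ((hX.1 (n+1)) (measurableSet_singleton z')))
  have hint : Integrable (Set.indicator {ω' | X (n + 1) ω' = z'} (fun _ => (1 : ℝ))) μ :=
    (integrable_const (1:ℝ)).indicator hBm
  have h1 : ∫ ω in A, (μ[Set.indicator {ω' | X (n + 1) ω' = z'} (fun _ => (1 : ℝ)) | ℱ n]) ω ∂μ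
      = ∫ ω in A, (fun _ => p z z') ω ∂μ := by
    refine setIntegral_congr_ae hAm ?_
    filter_upwards [hX.2 n z z'] with ω hω hmem
    exact hω (hAz hmem)
  rw [setIntegral_condExp (ℱ.le n) hint hA] at h1
  rw [setIntegral_indicator hBm] at h1
  simp only [setIntegral_const, smul_eq_mul, mul_one, measureReal_def] at h1
  have h2 : (μ (A ∩ {ω | X (n+1) ω = z'})).toReal
      = (ENNReal.ofReal (p z z') * μ A).toReal := by
    rw [ENNReal.toReal_mul, ENNReal.toReal_ofReal hp, h1, mul_comm]
  exact (ENNReal.toReal_eq_toReal_iff' (measure_ne_top μ _)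
    (ENNReal.mul_ne_top ENNReal.ofReal_ne_top (measure_ne_top μ _))).mp h2

lemma alpha_sum_zero (S : ℕ) (n : Fin S → ℕ) (mu : Fin S → ℕ → ℝ) (sg : Fin S → ℕ → ℕ)
    (hsg : ∀ (i : Fin S) (j : ℕ), j ≤ n i → sg i j = 1 ∨ sg i j = 2)
    (hcrit : ReCritical S n mu sg) (i : Fin S) :
    ∑ j ∈ Finset.range (n i + 1), (mu i j)⁻¹ * (-1 : ℝ) ^ sg i j = 0 := by
  rw [← Finset.sum_filter_add_sum_filter_not (Finset.range (n i + 1)) (fun j => sg i j = 1)]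
  have h1 : ∑ j ∈ (Finset.range (n i + 1)).filter (fun j => sg i j = 1),
      (mu i j)⁻¹ * (-1 : ℝ) ^ sg i j
      = -∑ j ∈ (Finset.range (n i + 1)).filter (fun j => sg i j = 1), (mu i j)⁻¹ := by
    rw [← Finset.sum_neg_distrib]
    refine Finset.sum_congr rfl fun j hj => ?_
    rw [Finset.mem_filter] at hj
    rw [hj.2]; ring
  have hfeq : (Finset.range (n i + 1)).filter (fun j => ¬ sg i j = 1)
      = (Finset.range (n i + 1)).filter (fun j => sg i j = 2) := by
    refine Finset.filter_congr fun j hj => ?_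
    rw [Finset.mem_range] at hj
    rcases hsg i j (Nat.lt_succ_iff.mp hj) with h | h <;> simp [h]
  have h2 : ∑ j ∈ (Finset.range (n i + 1)).filter (fun j => ¬ sg i j = 1),
      (mu i j)⁻¹ * (-1 : ℝ) ^ sg i j
      = ∑ j ∈ (Finset.range (n i + 1)).filter (fun j => sg i j = 2), (mu i j)⁻¹ := by
    rw [hfeq]
    refine Finset.sum_congr rfl fun j hj => ?_
    rw [Finset.mem_filter] at hj
    rw [hj.2]; ring
  rw [h1, h2, hcrit i]; ring


lemma alpha_move (S M : ℕ) (n : Fin S → ℕ) (hn : ∀ i, 1 ≤ n i)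
    (mu : Fin S → ℕ → ℝ) (sg : Fin S → ℕ → ℕ)
    (hsg : ∀ (i : Fin S) (j : ℕ), j ≤ n i → sg i j = 1 ∨ sg i j = 2)
    (kbar : Fin S → ℕ → Fin M) (ibar : Fin M → Fin S) (jbar : Fin M → ℕ)
    (hidx : ReIndex S M n kbar ibar jbar) (hcrit : ReCritical S n mu sg)
    (z : Fin M → ℕ) (i : Fin S) (j : ℕ) (hj : j ≤ n i)
    (hz : j = 0 ∨ 0 < z (kbar i j)) :
    ∑ k, reAlpha S M mu sg ibar jbar k * ((reMove S M n kbar z i j k : ℝ))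
      = (∑ k, reAlpha S M mu sg ibar jbar k * (z k : ℝ))
        + (mu i j)⁻¹ * (-1 : ℝ) ^ sg i j := by
  set α := reAlpha S M mu sg ibar jbar with hα
  have halpha : ∀ j', 1 ≤ j' → j' ≤ n i →
      α (kbar i j') = ∑ j'' ∈ Finset.range j', (mu i j'')⁻¹ * (-1 : ℝ) ^ sg i j'' := by
    intro j' h1 h2
    obtain ⟨hi, hj'⟩ := hidx.1 i j' h1 h2
    rw [hα]; unfold reAlpha; rw [hi, hj']
  by_cases h0 : j = 0
  · subst h0
    have hcast : ∀ k, ((reMove S M n kbar z i 0 k : ℕ) : ℝ)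
        = (z k : ℝ) + (if k = kbar i 1 then (1:ℝ) else 0) := by
      intro k; unfold reMove; simp only [if_pos rfl]
      by_cases hk : k = kbar i 1 <;> simp [hk]
    simp only [hcast, mul_add]
    rw [Finset.sum_add_distrib]
    congr 1
    have : ∀ k : Fin M, α k * (if k = kbar i 1 then (1:ℝ) else 0)
        = if k = kbar i 1 then α (kbar i 1) else 0 := by
      intro k; by_cases hk : k = kbar i 1 <;> simp [hk]
    rw [Finset.sum_congr rfl fun k _ => this k, Finset.sum_ite_eq' Finset.univ,
      if_pos (Finset.mem_univ _), halpha 1 le_rfl (hn i)]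
    simp
  · by_cases hni : j = n i
    · subst hni
      have hzpos : 1 ≤ z (kbar i (n i)) := by
        rcases hz with h | h
        · exact absurd h h0
        · exact h
      have hcast : ∀ k, ((reMove S M n kbar z i (n i) k : ℕ) : ℝ)
          = (z k : ℝ) - (if k = kbar i (n i) then (1:ℝ) else 0) := by
        intro k; unfold reMove
        simp only [if_neg h0, if_pos rfl]
        by_cases hk : k = kbar i (n i)
        · subst hk; simp [Nat.cast_sub hzpos]
        · simp [hk]
      simp only [hcast, mul_sub]
      rw [Finset.sum_sub_distrib]
      have : ∀ k : Fin M, α k * (if k = kbar i (n i) then (1:ℝ) else 0)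
          = if k = kbar i (n i) then α (kbar i (n i)) else 0 := by
        intro k; by_cases hk : k = kbar i (n i) <;> simp [hk]
      rw [Finset.sum_congr rfl fun k _ => this k, Finset.sum_ite_eq' Finset.univ,
        if_pos (Finset.mem_univ _), halpha (n i) (hn i) le_rfl]
      have hz0 := alpha_sum_zero S n mu sg hsg hcrit i
      rw [Finset.sum_range_succ] at hz0
      have : ∑ j'' ∈ Finset.range (n i), (mu i j'')⁻¹ * (-1:ℝ) ^ sg i j''
          = -((mu i (n i))⁻¹ * (-1:ℝ) ^ sg i (n i)) := by linarith
      rw [this]; ring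
    · -- middle case
      have hj1 : 1 ≤ j := Nat.one_le_iff_ne_zero.mpr h0
      have hjlt : j < n i := lt_of_le_of_ne hj hni
      have hzpos : 1 ≤ z (kbar i j) := by
        rcases hz with h | h
        · exact absurd h h0
        · exact h
      have hne : kbar i (j+1) ≠ kbar i j := by
        intro h
        have h1 := (hidx.1 i (j+1) (by omega) hjlt).2
        have h2 := (hidx.1 i j hj1 hj).2
        rw [h] at h1; omega
      have hcast : ∀ k, ((reMove S M n kbar z i j k : ℕ) : ℝ)
          = (z k : ℝ) + (if k = kbar i (j+1) then (1:ℝ) else 0)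
            - (if k = kbar i j then (1:ℝ) else 0) := by
        intro k; unfold reMove
        simp only [if_neg h0, if_neg hni]
        by_cases hk : k = kbar i j
        · subst hk
          have hne2 : ¬ (kbar i j = kbar i (j+1)) := fun h => hne h.symm
          simp [hne2, Nat.cast_sub hzpos]
        · by_cases hk' : k = kbar i (j+1) <;> simp [hk, hk', hne]
      simp only [hcast, mul_sub, mul_add]
      rw [Finset.sum_sub_distrib, Finset.sum_add_distrib]
      have e1 : ∀ k : Fin M, α k * (if k = kbar i (j+1) then (1:ℝ) else 0)
          = if k = kbar i (j+1) then α (kbar i (j+1)) else 0 := by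
        intro k; by_cases hk : k = kbar i (j+1) <;> simp [hk]
      have e2 : ∀ k : Fin M, α k * (if k = kbar i j then (1:ℝ) else 0)
          = if k = kbar i j then α (kbar i j) else 0 := by
        intro k; by_cases hk : k = kbar i j <;> simp [hk]
      rw [Finset.sum_congr rfl fun k _ => e1 k, Finset.sum_congr rfl fun k _ => e2 k,
        Finset.sum_ite_eq' Finset.univ, Finset.sum_ite_eq' Finset.univ,
        if_pos (Finset.mem_univ _), if_pos (Finset.mem_univ _),
        halpha (j+1) (by omega) hjlt, halpha j hj1 hj,
        Finset.sum_range_succ]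
      ring

theorem hitTime_lintegral_top {Ω : Type} {St : Type} [MeasurableSpace St]
    [MeasurableSingletonClass St] [Countable St]
    {mΩ : MeasurableSpace Ω} (μ : Measure Ω) [IsProbabilityMeasure μ]
    (ℱ : Filtration ℕ mΩ) (X : ℕ → Ω → St) (f : St → ℝ) (x y : St) (C : ℝ)
    (hC : 0 < C) (hfxy : f x ≠ f y)
    (hmeas : ∀ n, Measurable[ℱ n] (X n))
    (hX0 : ∀ᵐ ω ∂μ, X 0 ω = x)
    (hstep : ∀ (n : ℕ) (z : St), ∃ (a b : St) (p q : ℝ), a ≠ b ∧ 0 ≤ p ∧ 0 ≤ q ∧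
      p + q = 1 ∧ p * f a + q * f b = f z ∧ |f a - f z| ≤ C ∧ |f b - f z| ≤ C ∧
      ∀ A : Set Ω, MeasurableSet[ℱ n] A → A ⊆ {ω | X n ω = z} →
        μ (A ∩ {ω | X (n+1) ω = a}) = ENNReal.ofReal p * μ A ∧
        μ (A ∩ {ω | X (n+1) ω = b}) = ENNReal.ofReal q * μ A) :
    ∫⁻ ω, hitTime X y ω ∂μ = ⊤ := by
  classical
  choose a b pp qq hab hp hq hpq hconv hCa hCb hmr using hstep
  -- basic measurability
  have mX : ∀ n, Measurable (X n) := fun n => (hmeas n).mono (ℱ.le n) le_rfl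
  have mf : Measurable f := measurable_of_countable f
  have mV : ∀ n, Measurable fun ω => f (X n ω) := fun n => mf.comp (mX n)
  set G : ℕ → Set Ω := fun n => {ω | ∀ m ≤ n, X m ω ≠ y} with hG
  have mGF : ∀ n, MeasurableSet[ℱ n] (G n) := by
    intro n
    have hGeq : G n = ⋂ m, ⋂ (_ : m ≤ n), ({ω | X m ω = y})ᶜ := by
      ext ω; simp [hG]
    rw [hGeq]
    exact MeasurableSet.iInter fun m => MeasurableSet.iInter fun hm =>
      MeasurableSet.compl (ℱ.mono hm _ ((hmeas m) (measurableSet_singleton y)))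
  have mG : ∀ n, MeasurableSet (G n) := fun n => ℱ.le n _ (mGF n)
  -- state-sets
  have mSa : ∀ n z, MeasurableSet {ω | X (n+1) ω = a n z} := fun n z =>
    mX (n+1) (measurableSet_singleton _)
  have mSb : ∀ n z, MeasurableSet {ω | X (n+1) ω = b n z} := fun n z =>
    mX (n+1) (measurableSet_singleton _)
  have mXz : ∀ n (z : St), MeasurableSet {ω | X n ω = z} := fun n z =>
    mX n (measurableSet_singleton _)
  -- disjointness of the two target events
  have hdisj : ∀ n z, Disjoint {ω | X (n+1) ω = a n z} {ω | X (n+1) ω = b n z} := by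
    intro n z
    refine Set.disjoint_left.mpr fun ω h1 h2 => hab n z ?_
    rw [← h1, ← h2]
  -- null complement on each slice
  have hnull : ∀ n (z : St) (A : Set Ω), MeasurableSet[ℱ n] A → A ⊆ {ω | X n ω = z} →
      μ (A \ ({ω | X (n+1) ω = a n z} ∪ {ω | X (n+1) ω = b n z})) = 0 := by
    intro n z A hA hAz
    obtain ⟨h1, h2⟩ := hmr n z A hA hAz
    have hU : μ (A ∩ ({ω | X (n+1) ω = a n z} ∪ {ω | X (n+1) ω = b n z})) = μ A := by
      rw [Set.inter_union_distrib_left,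
        measure_union ((hdisj n z).mono Set.inter_subset_right Set.inter_subset_right)
          ((ℱ.le n A hA).inter (mSb n z)),
        h1, h2, ← add_mul, ← ENNReal.ofReal_add (hp n z) (hq n z), hpq n z,
        ENNReal.ofReal_one, one_mul]
    have hsplit := measure_inter_add_diff (μ := μ) A ((mSa n z).union (mSb n z))
    rw [hU] at hsplit
    have : μ A + μ (A \ ({ω | X (n+1) ω = a n z} ∪ {ω | X (n+1) ω = b n z})) = μ A + 0 := by
      rw [add_zero]; exact hsplit
    exact (ENNReal.add_right_inj (measure_ne_top μ A)).mp this
  -- a.e. the chain moves to one of the two designated states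
  have hae : ∀ n, ∀ᵐ ω ∂μ, X (n+1) ω = a n (X n ω) ∨ X (n+1) ω = b n (X n ω) := by
    intro n
    have hz : ∀ z : St, ∀ᵐ ω ∂μ,
        ω ∉ ({ω | X n ω = z} \ ({ω | X (n+1) ω = a n z} ∪ {ω | X (n+1) ω = b n z})) := by
      intro z
      rw [← MeasureTheory.measure_eq_zero_iff_ae_notMem]
      exact hnull n z _ (hmeas n (measurableSet_singleton z)) (fun ω h => h)
    have := (MeasureTheory.ae_all_iff).mpr hz
    filter_upwards [this] with ω hω
    by_contra hcon
    push_neg at hcon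
    refine hω (X n ω) ⟨rfl, fun hmem => ?_⟩
    rcases hmem with h | h
    exacts [hcon.1 h, hcon.2 h]
  -- bounded increments a.e.
  have hbd : ∀ n, ∀ᵐ ω ∂μ, |f (X (n+1) ω) - f (X n ω)| ≤ C := by
    intro n
    filter_upwards [hae n] with ω hω
    rcases hω with h | h
    · rw [h]; exact hCa n (X n ω)
    · rw [h]; exact hCb n (X n ω)
  -- the stopped process
  set D : ℕ → Ω → ℝ := fun n ω => f (X (n+1) ω) - f (X n ω) with hD
  set Y : ℕ → Ω → ℝ := fun n => Nat.rec (motive := fun _ => Ω → ℝ) (fun ω => f (X 0 ω))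
    (fun m Ym ω => Ym ω + (G m).indicator (D m) ω) n with hYdef
  have hY0 : ∀ ω, Y 0 ω = f (X 0 ω) := fun ω => rfl
  have hYs : ∀ n ω, Y (n+1) ω = Y n ω + (G n).indicator (D n) ω := fun n ω => rfl
  have intD : ∀ n, Integrable (D n) μ := by
    intro n
    refine Integrable.mono' (integrable_const C)
      (((mV (n+1)).sub (mV n)).aestronglyMeasurable) ?_
    filter_upwards [hbd n] with ω h
    simpa [hD, Real.norm_eq_abs] using h
  have mY : ∀ n, Measurable (Y n) := by
    intro n
    induction n with
    | zero => exact mV 0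
    | succ n ih => exact ih.add (((mV (n+1)).sub (mV n)).indicator (mG n))
  have hYbd : ∀ n, ∀ᵐ ω ∂μ, |Y n ω| ≤ |f x| + n * C := by
    intro n
    induction n with
    | zero =>
      filter_upwards [hX0] with ω h
      rw [hY0, h]
      simp
    | succ n ih =>
      filter_upwards [ih, hbd n] with ω h1 h2
      have hind : |(G n).indicator (D n) ω| ≤ C := by
        by_cases hω : ω ∈ G n
        · rw [Set.indicator_of_mem hω]; exact h2
        · rw [Set.indicator_of_notMem hω]; simpa using hC.le
      rw [hYs]
      push_cast
      calc |Y n ω + (G n).indicator (D n) ω| ≤ |Y n ω| + |(G n).indicator (D n) ω| :=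
            abs_add_le _ _
        _ ≤ (|f x| + n * C) + C := add_le_add h1 hind
        _ = |f x| + (n + 1) * C := by ring
  have intY : ∀ n, Integrable (Y n) μ := by
    intro n
    refine Integrable.mono' (integrable_const (|f x| + n * C))
      (mY n).aestronglyMeasurable ?_
    filter_upwards [hYbd n] with ω h
    simpa [Real.norm_eq_abs] using h
  -- martingale step on each slice
  have hpiece : ∀ n (z : St), ∫ ω in G n ∩ {ω | X n ω = z}, D n ω ∂μ = 0 := by
    intro n z
    set A := G n ∩ {ω | X n ω = z} with hA
    have hAF : MeasurableSet[ℱ n] A := (mGF n).inter (hmeas n (measurableSet_singleton z))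
    have hAm : MeasurableSet A := ℱ.le n _ hAF
    have hAz : A ⊆ {ω | X n ω = z} := Set.inter_subset_right
    obtain ⟨h1, h2⟩ := hmr n z A hAF hAz
    set Sa := {ω | X (n+1) ω = a n z} with hSa
    set Sb := {ω | X (n+1) ω = b n z} with hSb
    have hAae : A =ᵐ[μ] ((A ∩ Sa ∪ A ∩ Sb : Set Ω)) := by
      refine MeasureTheory.ae_eq_set.mpr ⟨?_, ?_⟩
      · refine measure_mono_null (fun ω hω => ?_) (hnull n z A hAF hAz)
        refine ⟨hω.1, fun h => hω.2 ?_⟩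
        rcases h with h | h
        exacts [Or.inl ⟨hω.1, h⟩, Or.inr ⟨hω.1, h⟩]
      · refine measure_mono_null (fun ω hω => ?_) (measure_empty (μ := μ))
        exact absurd (by rcases hω.1 with h | h; exacts [h.1, h.1]) hω.2
    have hdisj' : Disjoint (A ∩ Sa) (A ∩ Sb) :=
      (hdisj n z).mono Set.inter_subset_right Set.inter_subset_right
    rw [setIntegral_congr_set hAae,
      setIntegral_union hdisj' (hAm.inter (mSb n z)) ((intD n).integrableOn)
        ((intD n).integrableOn)]
    have ha : ∫ ω in A ∩ Sa, D n ω ∂μ = (μ (A ∩ Sa)).toReal * (f (a n z) - f z) := by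
      rw [setIntegral_congr_fun (hAm.inter (mSa n z))
        (fun ω hω => by
          show D n ω = f (a n z) - f z
          rw [hD]
          simp only []
          rw [show X (n+1) ω = a n z from hω.2, show X n ω = z from hAz hω.1]),
        setIntegral_const, smul_eq_mul, measureReal_def]
    have hb : ∫ ω in A ∩ Sb, D n ω ∂μ = (μ (A ∩ Sb)).toReal * (f (b n z) - f z) := by
      rw [setIntegral_congr_fun (hAm.inter (mSb n z))
        (fun ω hω => by
          show D n ω = f (b n z) - f z
          rw [hD]
          simp only []
          rw [show X (n+1) ω = b n z from hω.2, show X n ω = z from hAz hω.1]),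
        setIntegral_const, smul_eq_mul, measureReal_def]
    rw [ha, hb, h1, h2, ENNReal.toReal_mul, ENNReal.toReal_mul,
      ENNReal.toReal_ofReal (hp n z), ENNReal.toReal_ofReal (hq n z)]
    linear_combination (μ A).toReal * hconv n z - (μ A).toReal * f z * hpq n z
  -- constant expectation
  have hint_eq : ∀ n, ∫ ω, Y (n+1) ω ∂μ = ∫ ω, Y n ω ∂μ := by
    intro n
    have hsplit : ∫ ω, Y (n+1) ω ∂μ
        = ∫ ω, Y n ω ∂μ + ∫ ω, (G n).indicator (D n) ω ∂μ := by
      rw [← integral_add (intY n) ((intD n).indicator (mG n))]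
    rw [hsplit, add_eq_left, integral_indicator (mG n)]
    have hdecomp : G n = ⋃ z : St, (G n ∩ {ω | X n ω = z}) := by
      ext ω
      simp only [Set.mem_iUnion, Set.mem_inter_iff, Set.mem_setOf_eq]
      exact ⟨fun h => ⟨X n ω, h, rfl⟩, fun ⟨z, h, _⟩ => h⟩
    rw [hdecomp, integral_iUnion (fun z => (mG n).inter (mXz n z))
      (fun z z' hzz => Set.disjoint_left.mpr fun ω h1 h2 => hzz (by rw [← h1.2, ← h2.2]))
      ((intD n).integrableOn)]
    simp [hpiece n]
  have hYint : ∀ n, ∫ ω, Y n ω ∂μ = f x := by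
    intro n
    induction n with
    | zero =>
      have : ∫ ω, Y 0 ω ∂μ = ∫ _ω, f x ∂μ :=
        integral_congr_ae (hX0.mono fun ω h => by rw [hY0, h])
      rw [this, integral_const]
      simp
    | succ n ih => rw [hint_eq n, ih]
  -- pointwise description of Y
  have hYval : ∀ n ω, (ω ∈ G n → Y n ω = f (X n ω)) ∧ (ω ∉ G n → Y n ω = f y) := by
    intro n
    induction n with
    | zero =>
      intro ω
      refine ⟨fun _ => hY0 ω, fun hω => ?_⟩
      have hy : X 0 ω = y := by
        by_contra h
        exact hω fun m hm => by rw [Nat.le_zero.mp hm]; exact h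
      rw [hY0, hy]
    | succ n ih =>
      intro ω
      have hmono : ω ∈ G (n+1) → ω ∈ G n := fun h m hm => h m (hm.trans (Nat.le_succ n))
      constructor
      · intro hω
        have hωn := hmono hω
        rw [hYs, Set.indicator_of_mem hωn, (ih ω).1 hωn]
        simp only [hD]
        ring
      · intro hω
        by_cases hωn : ω ∈ G n
        · rw [hYs, Set.indicator_of_mem hωn, (ih ω).1 hωn]
          have hy : X (n+1) ω = y := by
            by_contra h
            refine hω fun m hm => ?_
            rcases Nat.lt_or_ge m (n+1) with h' | h'
            · exact hωn m (Nat.lt_succ_iff.mp h')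
            · rw [le_antisymm hm h']; exact h
          simp only [hD]
          rw [hy]; ring
        · rw [hYs, Set.indicator_of_notMem hωn, (ih ω).2 hωn, add_zero]
  -- quantitative lower bound on μ (G n)
  set d := |f x - f y| with hd
  have hd0 : 0 < d := abs_pos.mpr (sub_ne_zero.mpr hfxy)
  set K := |f x| + |f y| + C with hK
  have hK0 : 0 < K := by
    have := abs_nonneg (f x); have := abs_nonneg (f y); rw [hK]; linarith
  have hGlb : ∀ n : ℕ, ENNReal.ofReal (d / (K * ((n:ℝ)+1))) ≤ μ (G n) := by
    intro n
    have hzero : ∫ ω in (G n)ᶜ, (Y n ω - f y) ∂μ = 0 := by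
      have heq : Set.EqOn (fun ω => Y n ω - f y) (fun _ => (0:ℝ)) (G n)ᶜ :=
        fun ω hω => by simp only []; rw [(hYval n ω).2 hω, sub_self]
      rw [setIntegral_congr_fun (mG n).compl heq]
      simp
    have hsplit : ∫ ω, (Y n ω - f y) ∂μ = ∫ ω in G n, (Y n ω - f y) ∂μ := by
      have h := integral_add_compl (mG n) ((intY n).sub (integrable_const (f y)))
      simp only [Pi.sub_apply] at h
      rw [hzero, add_zero] at h
      exact h.symm
    have hval : ∫ ω, (Y n ω - f y) ∂μ = f x - f y := by
      rw [integral_sub (intY n) (integrable_const _), hYint n, integral_const]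
      simp
    have hb : ∀ᵐ ω ∂(μ.restrict (G n)), ‖Y n ω - f y‖ ≤ |f x| + n * C + |f y| := by
      refine ae_restrict_of_ae ?_
      filter_upwards [hYbd n] with ω h
      rw [Real.norm_eq_abs]
      calc |Y n ω - f y| ≤ |Y n ω| + |f y| := abs_sub _ _
        _ ≤ |f x| + n*C + |f y| := by linarith
    have hnorm := norm_integral_le_of_norm_le_const hb
    rw [measureReal_def, Measure.restrict_apply_univ] at hnorm
    have hdle : d ≤ (|f x| + n*C + |f y|) * (μ (G n)).toReal := by
      rw [hd]
      calc |f x - f y| = ‖∫ ω in G n, (Y n ω - f y) ∂μ‖ := by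
            rw [← hsplit, hval, Real.norm_eq_abs]
        _ ≤ _ := hnorm
    have habs : d ≤ (K * ((n:ℝ)+1)) * (μ (G n)).toReal := by
      refine hdle.trans (mul_le_mul_of_nonneg_right ?_ ENNReal.toReal_nonneg)
      rw [hK]
      nlinarith [abs_nonneg (f x), abs_nonneg (f y), hC.le,
        mul_nonneg (Nat.cast_nonneg (α := ℝ) n) (abs_nonneg (f x)),
        mul_nonneg (Nat.cast_nonneg (α := ℝ) n) (abs_nonneg (f y))]
    have hKn : (0:ℝ) < K * ((n:ℝ)+1) := by positivity
    have hfin : d / (K * ((n:ℝ)+1)) ≤ (μ (G n)).toReal := by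
      rw [div_le_iff₀ hKn]
      nlinarith [habs]
    calc ENNReal.ofReal (d / (K*((n:ℝ)+1))) ≤ ENNReal.ofReal ((μ (G n)).toReal) :=
          ENNReal.ofReal_le_ofReal hfin
      _ = μ (G n) := ENNReal.ofReal_toReal (measure_ne_top μ _)
  -- lower bounds on the hitting time
  have hTlb : ∀ (n : ℕ) (ω : Ω), ω ∈ G n → ((n:ℝ≥0∞)+1) ≤ hitTime X y ω := by
    intro n ω hω
    refine le_sInf fun t ht => ?_
    obtain ⟨m, hm, rfl⟩ := ht
    have hlt : n < m := by
      by_contra h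
      exact hω m (Nat.le_of_not_lt h) hm
    have : ((n+1:ℕ):ℝ≥0∞) ≤ (m:ℝ≥0∞) := by exact_mod_cast Nat.succ_le_of_lt hlt
    simpa using this
  have hptw : ∀ ω, ∑' n : ℕ, (G n).indicator (fun _ => (1:ℝ≥0∞)) ω ≤ hitTime X y ω := by
    intro ω
    rw [ENNReal.tsum_eq_iSup_sum]
    refine iSup_le fun F => ?_
    set F' := F.filter (fun n => ω ∈ G n) with hF'
    have hsum : ∑ n ∈ F, (G n).indicator (fun _ => (1:ℝ≥0∞)) ω = (F'.card : ℝ≥0∞) := by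
      rw [hF', Finset.card_filter]
      push_cast
      refine Finset.sum_congr rfl fun n _ => ?_
      by_cases h : ω ∈ G n <;> simp [h]
    rw [hsum]
    rcases Finset.eq_empty_or_nonempty F' with h | h
    · simp [h]
    · have hmax := F'.max'_mem h
      set n₀ := F'.max' h with hn₀
      have hsub : F' ⊆ Finset.range (n₀ + 1) := fun m hm =>
        Finset.mem_range.mpr (Nat.lt_succ_of_le (F'.le_max' m hm))
      have hcard : F'.card ≤ n₀ + 1 := by
        simpa using Finset.card_le_card hsub
      have hG0 : ω ∈ G n₀ := (Finset.mem_filter.mp hmax).2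
      calc (F'.card : ℝ≥0∞) ≤ ((n₀ + 1 : ℕ) : ℝ≥0∞) := by exact_mod_cast hcard
        _ ≤ hitTime X y ω := by push_cast; exact hTlb n₀ ω hG0
  -- divergence of the harmonic lower bound
  have hdne : d ≠ 0 := hd0.ne'
  have hKne : K ≠ 0 := hK0.ne'
  have hdiv : ∑' n : ℕ, ENNReal.ofReal (d / (K * ((n:ℝ)+1))) = ⊤ := by
    by_contra h
    have hsummable : Summable (fun n : ℕ => d / (K * ((n:ℝ)+1))) :=
      (ENNReal.summable_toReal h).congr fun n =>
        ENNReal.toReal_ofReal (div_nonneg hd0.le (by positivity))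
    have h2 : Summable (fun n : ℕ => 1 / ((n:ℝ)+1)) := by
      refine (hsummable.mul_left (K / d)).congr fun n => ?_
      field_simp
    exact Real.not_summable_one_div_natCast
      ((summable_nat_add_iff 1).mp (h2.congr fun n => by push_cast; ring))
  have hsum_top : ∑' n : ℕ, μ (G n) = ⊤ :=
    top_le_iff.mp (hdiv ▸ ENNReal.tsum_le_tsum hGlb)
  have hTint : ∑' n : ℕ, μ (G n) ≤ ∫⁻ ω, hitTime X y ω ∂μ := by
    have h1 : ∫⁻ ω, ∑' n : ℕ, (G n).indicator (fun _ => (1:ℝ≥0∞)) ω ∂μ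
        ≤ ∫⁻ ω, hitTime X y ω ∂μ := lintegral_mono hptw
    rw [lintegral_tsum (fun n => (measurable_const.indicator (mG n)).aemeasurable)] at h1
    refine le_trans (le_of_eq (tsum_congr fun n => ?_)) h1
    rw [lintegral_indicator (mG n)]
    simp
  exact top_le_iff.mp (hsum_top ▸ hTint)

/-- Non-stabilizability of the critical two-server re-entrant line network, hitting-time
form: with `α_k = ∑_{j=0}^{j̄(k)-1} μ_{ī(k),j}⁻¹ (-1)^{σ(ī(k),j)}`, for every non-idling
policy, every realization of the induced chain started at `x`, and every state `y` with
`α ⬝ x ≠ α ⬝ y`, the hitting time of `y` has infinite expectation. -/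
theorem reentrant_hitting_time_infinite (S M : ℕ) (hS : 1 ≤ S)
    (n : Fin S → ℕ) (hn : ∀ i, 1 ≤ n i)
    (mu : Fin S → ℕ → ℝ) (hmu : ∀ (i : Fin S) (j : ℕ), j ≤ n i → 0 < mu i j)
    (sg : Fin S → ℕ → ℕ) (hsg : ∀ (i : Fin S) (j : ℕ), j ≤ n i → sg i j = 1 ∨ sg i j = 2)
    (hM : M = ∑ i, n i)
    (kbar : Fin S → ℕ → Fin M) (ibar : Fin M → Fin S) (jbar : Fin M → ℕ)
    (hidx : ReIndex S M n kbar ibar jbar)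
    (hcrit : ReCritical S n mu sg)
    (hserv1 : ∃ (i : Fin S) (j : ℕ), j ≤ n i ∧ sg i j = 1)
    (hserv2 : ∃ (i : Fin S) (j : ℕ), j ≤ n i ∧ sg i j = 2)
    (pol : (Fin M → ℕ) → ((Fin S × ℕ) × (Fin S × ℕ)))
    (hpol : ReNonIdling S M n sg kbar pol)
    {Ω : Type} {mΩ : MeasurableSpace Ω} (μ : Measure Ω) [IsProbabilityMeasure μ]
    (ℱ : Filtration ℕ mΩ) (X : ℕ → Ω → (Fin M → ℕ))
    (x : Fin M → ℕ) (hX0 : ∀ᵐ ω ∂μ, X 0 ω = x)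
    (hX : IsRealization μ ℱ X (reTrans S M n mu kbar pol))
    (y : Fin M → ℕ)
    (hxy : ∑ k : Fin M, reAlpha S M mu sg ibar jbar k * (x k : ℝ)
         ≠ ∑ k : Fin M, reAlpha S M mu sg ibar jbar k * (y k : ℝ)) :
    ∫⁻ ω, hitTime X y ω ∂μ = ⊤ := by
  classical
  have hSne : Nonempty (Fin S) := ⟨⟨0, hS⟩⟩
  set f : (Fin M → ℕ) → ℝ := fun z => ∑ k, reAlpha S M mu sg ibar jbar k * (z k : ℝ)
    with hf
  set C : ℝ := ∑ i : Fin S, ∑ j ∈ Finset.range (n i + 1), (mu i j)⁻¹ with hCdef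
  have hC : 0 < C := by
    rw [hCdef]
    refine Finset.sum_pos (fun i _ => Finset.sum_pos (fun j hj => inv_pos.mpr
      (hmu i j (Nat.lt_succ_iff.mp (Finset.mem_range.mp hj))))
      ⟨0, Finset.mem_range.mpr (Nat.succ_pos _)⟩) Finset.univ_nonempty
  have hCbound : ∀ (i : Fin S) (j : ℕ), j ≤ n i → (mu i j)⁻¹ ≤ C := by
    intro i j hj
    rw [hCdef]
    calc (mu i j)⁻¹ ≤ ∑ j' ∈ Finset.range (n i + 1), (mu i j')⁻¹ :=
          Finset.single_le_sum (fun j' hj' => (inv_pos.mpr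
            (hmu i j' (Nat.lt_succ_iff.mp (Finset.mem_range.mp hj')))).le)
            (Finset.mem_range.mpr (Nat.lt_succ_of_le hj))
      _ ≤ ∑ i' : Fin S, ∑ j' ∈ Finset.range (n i' + 1), (mu i' j')⁻¹ :=
          Finset.single_le_sum (fun i' _ => Finset.sum_nonneg fun j' hj' =>
            (inv_pos.mpr (hmu i' j' (Nat.lt_succ_iff.mp (Finset.mem_range.mp hj')))).le)
            (Finset.mem_univ i)
  have hstep : ∀ (n' : ℕ) (z : Fin M → ℕ), ∃ (a b : Fin M → ℕ) (p q : ℝ),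
      a ≠ b ∧ 0 ≤ p ∧ 0 ≤ q ∧
      p + q = 1 ∧ p * f a + q * f b = f z ∧ |f a - f z| ≤ C ∧ |f b - f z| ≤ C ∧
      ∀ A : Set Ω, MeasurableSet[ℱ n'] A → A ⊆ {ω | X n' ω = z} →
        μ (A ∩ {ω | X (n'+1) ω = a}) = ENNReal.ofReal p * μ A ∧
        μ (A ∩ {ω | X (n'+1) ω = b}) = ENNReal.ofReal q * μ A := by
    intro n' z
    obtain ⟨hs1, hs2, hj1, hj2, hz1, hz2⟩ := hpol z
    set i1 := (pol z).1.1 with hi1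
    set j1 := (pol z).1.2 with hj1'
    set i2 := (pol z).2.1 with hi2
    set j2 := (pol z).2.2 with hj2'
    have hm1 : 0 < mu i1 j1 := hmu i1 j1 hj1
    have hm2 : 0 < mu i2 j2 := hmu i2 j2 hj2
    have hm1i : (0:ℝ) < (mu i1 j1)⁻¹ := inv_pos.mpr hm1
    have hm2i : (0:ℝ) < (mu i2 j2)⁻¹ := inv_pos.mpr hm2
    have hsumpos : 0 < mu i1 j1 + mu i2 j2 := by linarith
    have hfa : f (reMove S M n kbar z i1 j1) = f z - (mu i1 j1)⁻¹ := by
      rw [hf]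
      simp only []
      rw [alpha_move S M n hn mu sg hsg kbar ibar jbar hidx hcrit z i1 j1 hj1 hz1, hs1]
      ring
    have hfb : f (reMove S M n kbar z i2 j2) = f z + (mu i2 j2)⁻¹ := by
      rw [hf]
      simp only []
      rw [alpha_move S M n hn mu sg hsg kbar ibar jbar hidx hcrit z i2 j2 hj2 hz2, hs2]
      ring
    have hane : reMove S M n kbar z i1 j1 ≠ reMove S M n kbar z i2 j2 := by
      intro h
      have heq : f (reMove S M n kbar z i1 j1) = f (reMove S M n kbar z i2 j2) := by rw [h]
      rw [hfa, hfb] at heq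
      linarith
    refine ⟨reMove S M n kbar z i1 j1, reMove S M n kbar z i2 j2,
      mu i1 j1 / (mu i1 j1 + mu i2 j2), mu i2 j2 / (mu i1 j1 + mu i2 j2),
      hane, div_nonneg hm1.le hsumpos.le, div_nonneg hm2.le hsumpos.le, ?_, ?_, ?_, ?_, ?_⟩
    · field_simp
    · rw [hfa, hfb]
      field_simp
      ring
    · rw [hfa]
      have : f z - (mu i1 j1)⁻¹ - f z = -(mu i1 j1)⁻¹ := by ring
      rw [this, abs_neg, abs_of_pos hm1i]
      exact hCbound i1 j1 hj1
    · rw [hfb]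
      have : f z + (mu i2 j2)⁻¹ - f z = (mu i2 j2)⁻¹ := by ring
      rw [this, abs_of_pos hm2i]
      exact hCbound i2 j2 hj2
    · intro A hA hAz
      have hta : reTrans S M n mu kbar pol z (reMove S M n kbar z i1 j1)
          = mu i1 j1 / (mu i1 j1 + mu i2 j2) := by
        unfold reTrans
        rw [← hi1, ← hj1', ← hi2, ← hj2']
        rw [if_pos rfl, if_neg hane, add_zero]
      have htb : reTrans S M n mu kbar pol z (reMove S M n kbar z i2 j2)
          = mu i2 j2 / (mu i1 j1 + mu i2 j2) := by
        unfold reTrans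
        rw [← hi1, ← hj1', ← hi2, ← hj2']
        rw [if_neg (Ne.symm hane), if_pos rfl, zero_add]
      constructor
      · have h := realization_measure_eq hX n' z (reMove S M n kbar z i1 j1)
          (by rw [hta]; exact div_nonneg hm1.le hsumpos.le) A hA hAz
        rw [hta] at h
        exact h
      · have h := realization_measure_eq hX n' z (reMove S M n kbar z i2 j2)
          (by rw [htb]; exact div_nonneg hm2.le hsumpos.le) A hA hAz
        rw [htb] at h
        exact h
  exact hitTime_lintegral_top μ ℱ X f x y C hC hxy hX.1 hX0 hstep
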